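/- For the point-null example with z fixed and α ∈ (0,1) fixed, there exists N such that for all n ≥ N, α lies strictly inside the incredibility interval [p₁(n)Φ(−zsqrt(n/(1+n))), p₁(n)Φ(−z sqrt(n/(1+n))) + p₀(n)], i.e., no conventional one-sided (1−α) credible interval endpoint exists for large n. -/

import Mathlib

open MeasureTheory Filter

/-- Standard normal CDF. -/
noncomputable def Phi (t : ℝ) : ℝ :=
  ∫ x in Set.Iic t, (Real.sqrt (2 * Real.pi))⁻¹ * Real.exp (-(x ^ 2) / 2)

lemma gauss_integrable :
    Integrable (fun x : ℝ => (Real.sqrt (2 * Real.pi))⁻¹ * Real.exp (-(x ^ 2) / 2)) := by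
  have h : Integrable (fun x : ℝ => Real.exp (-(1/2 : ℝ) * x ^ 2)) :=
    integrable_exp_neg_mul_sq (by norm_num)
  have := h.const_mul (Real.sqrt (2 * Real.pi))⁻¹
  convert this using 2 with x
  ring_nf

lemma Phi_nonneg (t : ℝ) : 0 ≤ Phi t := by
  apply setIntegral_nonneg measurableSet_Iic
  intro x _
  positivity

lemma Phi_le_one (t : ℝ) : Phi t ≤ 1 := by
  have htot : (∫ x : ℝ, (Real.sqrt (2 * Real.pi))⁻¹ * Real.exp (-(x ^ 2) / 2)) = 1 := by
    have h1 : (∫ x : ℝ, Real.exp (-(1/2 : ℝ) * x ^ 2)) = Real.sqrt (Real.pi / (1/2)) :=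
      integral_gaussian (1/2)
    have h2 : (fun x : ℝ => (Real.sqrt (2 * Real.pi))⁻¹ * Real.exp (-(x ^ 2) / 2))
        = fun x : ℝ => (Real.sqrt (2 * Real.pi))⁻¹ * Real.exp (-(1/2 : ℝ) * x ^ 2) := by
      funext x; ring_nf
    rw [h2, integral_const_mul, h1]
    have : Real.pi / (1/2) = 2 * Real.pi := by ring
    rw [this, inv_mul_cancel₀]
    positivity
  calc Phi t ≤ ∫ x : ℝ, (Real.sqrt (2 * Real.pi))⁻¹ * Real.exp (-(x ^ 2) / 2) := by
        apply setIntegral_le_integral gauss_integrable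
        filter_upwards with x
        positivity
    _ = 1 := htot

/-- Point-null example with `z ≠ 0` and `α ∈ (0,1)` fixed: for all large `n`, `α`
lies strictly inside the incredibility interval
`[p₁(n)Φ(−z√(n/(1+n))), p₁(n)Φ(−z√(n/(1+n))) + p₀(n)]`, where
`p₀(n) = BF₀₁/(1+BF₀₁)`, `BF₀₁ = √(1+n)exp(−nz²/(2(1+n)))`, `p₁(n) = 1 − p₀(n)`;
hence no conventional one-sided `(1−α)` credible-interval endpoint exists. -/
theorem stmt_14 (z : ℝ) (hz : z ≠ 0) (α : ℝ) (hα : 0 < α) (hα' : α < 1)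
    (B p0 p1 : ℕ → ℝ)
    (hB : ∀ n, B n = Real.sqrt (1 + n) * Real.exp (-(n * z ^ 2) / (2 * (1 + n))))
    (hp0 : ∀ n, p0 n = B n / (1 + B n)) (hp1 : ∀ n, p1 n = 1 - p0 n) :
    ∃ N : ℕ, ∀ n ≥ N,
      p1 n * Phi (-(z * Real.sqrt (n / (1 + n)))) < α ∧
      α < p1 n * Phi (-(z * Real.sqrt (n / (1 + n)))) + p0 n := by
  set c : ℝ := Real.exp (-(z ^ 2) / 2) with hc
  have hcpos : 0 < c := Real.exp_pos _
  have hBpos : ∀ n, 0 < B n := by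
    intro n
    rw [hB n]
    have : (0:ℝ) < 1 + n := by positivity
    positivity
  -- B tends to infinity
  have hBtop : Tendsto B atTop atTop := by
    rw [tendsto_atTop]
    intro M
    obtain ⟨N, hN⟩ := exists_nat_ge ((M / c) ^ 2)
    filter_upwards [eventually_ge_atTop N] with n hn
    have hn1 : (0:ℝ) < 1 + n := by positivity
    have hexp : c ≤ Real.exp (-(n * z ^ 2) / (2 * (1 + n))) := by
      apply Real.exp_le_exp.2
      rw [div_le_div_iff₀ (by norm_num : (0:ℝ) < 2) (by positivity : (0:ℝ) < 2 * (1 + (n:ℝ)))]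
      nlinarith [sq_nonneg z, Nat.cast_nonneg (α := ℝ) n]
    have hsq : (M / c) ^ 2 ≤ 1 + n := by
      have h1 : ((M / c) ^ 2 : ℝ) ≤ N := hN
      have h2 : (N : ℝ) ≤ n := Nat.cast_le.2 hn
      linarith
    have hsqrt : M / c ≤ Real.sqrt (1 + n) := by
      calc M / c ≤ |M / c| := le_abs_self _
        _ = Real.sqrt ((M / c) ^ 2) := (Real.sqrt_sq_eq_abs _).symm
        _ ≤ Real.sqrt (1 + n) := Real.sqrt_le_sqrt hsq
    have : M ≤ Real.sqrt (1 + n) * c := by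
      rw [← div_le_iff₀ hcpos]; exact hsqrt
    calc M ≤ Real.sqrt (1 + n) * c := this
      _ ≤ Real.sqrt (1 + n) * Real.exp (-(n * z ^ 2) / (2 * (1 + n))) := by
          apply mul_le_mul_of_nonneg_left hexp
          positivity
      _ = B n := (hB n).symm
  -- p0 tends to 1
  have hp0tend : Tendsto p0 atTop (nhds 1) := by
    have h1 : Tendsto (fun n => 1 + B n) atTop atTop :=
      tendsto_atTop_add_const_left _ 1 hBtop
    have h2 : Tendsto (fun n => (1 + B n)⁻¹) atTop (nhds 0) := h1.inv_tendsto_atTop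
    have h3 : Tendsto (fun n => 1 - (1 + B n)⁻¹) atTop (nhds (1 - 0)) :=
      tendsto_const_nhds.sub h2
    simp only [sub_zero] at h3
    convert h3 using 2 with n
    rw [hp0 n]
    have hne : (1 + B n) ≠ 0 := by have := hBpos n; linarith
    field_simp
    ring
  -- eventually p0 n > max α (1 - α)
  have hm : max α (1 - α) < 1 := by
    apply max_lt hα'; linarith
  have hev : ∀ᶠ n in atTop, max α (1 - α) < p0 n :=
    hp0tend.eventually (eventually_gt_nhds hm)
  obtain ⟨N, hN⟩ := eventually_atTop.1 hev
  refine ⟨N, fun n hn => ?_⟩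
  have h := hN n hn
  have hp0le : p0 n ≤ 1 := by
    rw [hp0 n]
    have h1 : (0:ℝ) < 1 + B n := by have := hBpos n; linarith
    rw [div_le_one h1]; linarith
  have hp1nn : 0 ≤ p1 n := by rw [hp1 n]; linarith
  have hPhi0 := Phi_nonneg (-(z * Real.sqrt (n / (1 + n))))
  have hPhi1 := Phi_le_one (-(z * Real.sqrt (n / (1 + n))))
  constructor
  · calc p1 n * Phi (-(z * Real.sqrt (n / (1 + n)))) ≤ p1 n :=
        mul_le_of_le_one_right hp1nn hPhi1
      _ = 1 - p0 n := hp1 n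
      _ < α := by have := le_max_right α (1 - α); linarith
  · have : α < p0 n := lt_of_le_of_lt (le_max_left α (1 - α)) h
    nlinarith [mul_nonneg hp1nn hPhi0]
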